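/- Conversely, if for some fixed M > 0, A ≥ 0 the function T ↦ 2M/(2 F(T)⁻¹ + A) (with value 0 when F(T)=0) is absolutely continuous on [0,T_h], where F is continuous, nonnegative, and monotone decreasing, then F is absolutely continuous on [0,T_h]. -/

import Mathlib

open Set MeasureTheory intervalIntegral

lemma phi_hasDerivAt (M A y : ℝ) (hy : 2*M - A*y ≠ 0) :
    HasDerivAt (fun z => 2*z/(2*M - A*z)) (4*M/(2*M - A*y)^2) y := by
  have h1 : HasDerivAt (fun z : ℝ => 2*z) 2 y := by
    simpa using (hasDerivAt_id y).const_mul (2:ℝ)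
  have h2 : HasDerivAt (fun z : ℝ => 2*M - A*z) (-A) y := by
    simpa using ((hasDerivAt_id y).const_mul A).const_sub (2*M)
  have := h1.div h2 hy
  rw [show (4*M/(2*M - A*y)^2) = (2 * (2 * M - A * y) - 2 * y * -A) / (2 * M - A * y) ^ 2 by
    congr 1; ring]
  exact this


lemma phi_sub_le (M A D y z : ℝ) (hM : 0 < M) (hD : 0 < D)
    (hy : D ≤ 2*M - A*y) (hz : D ≤ 2*M - A*z) :
    |2*y/(2*M - A*y) - 2*z/(2*M - A*z)| ≤ 4*M/D^2 * |y - z| := by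
  have hy0 : (0:ℝ) < 2*M - A*y := lt_of_lt_of_le hD hy
  have hz0 : (0:ℝ) < 2*M - A*z := lt_of_lt_of_le hD hz
  have key : 2*y/(2*M - A*y) - 2*z/(2*M - A*z)
      = 4*M*(y-z)/((2*M - A*y)*(2*M - A*z)) := by
    rw [div_sub_div _ _ hy0.ne' hz0.ne']
    ring
  rw [key, abs_div,
    abs_of_pos (show (0:ℝ) < (2*M - A*y)*(2*M - A*z) by positivity),
    div_le_iff₀ (by positivity)]
  have h1 : |4*M*(y-z)| = 4*M*|y-z| := by
    rw [abs_mul, abs_of_pos (show (0:ℝ) < 4*M by positivity)]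
  rw [h1]
  have h2 : D^2 ≤ (2*M - A*y)*(2*M - A*z) := by nlinarith
  calc 4*M*|y-z| = 4*M/D^2*|y-z| * D^2 := by field_simp
    _ ≤ 4*M/D^2*|y-z| * ((2*M - A*y)*(2*M - A*z)) := by
        apply mul_le_mul_of_nonneg_left h2 (by positivity)

lemma phi'_sub_le (M A D U y z : ℝ) (hM : 0 < M) (hD : 0 < D) (hA : 0 ≤ A)
    (hy : D ≤ 2*M - A*y) (hz : D ≤ 2*M - A*z)
    (hy' : 2*M - A*y ≤ U) (hz' : 2*M - A*z ≤ U) :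
    |4*M/(2*M - A*y)^2 - 4*M/(2*M - A*z)^2| ≤ 8*M*A*U/D^4 * |y - z| := by
  have hy0 : (0:ℝ) < 2*M - A*y := lt_of_lt_of_le hD hy
  have hz0 : (0:ℝ) < 2*M - A*z := lt_of_lt_of_le hD hz
  have hU : 0 < U := lt_of_lt_of_le hy0 hy'
  have key : 4*M/(2*M - A*y)^2 - 4*M/(2*M - A*z)^2
      = 4*M*((2*M-A*z)^2 - (2*M-A*y)^2)/((2*M - A*y)^2*(2*M - A*z)^2) := by
    rw [div_sub_div _ _ (pow_ne_zero 2 hy0.ne') (pow_ne_zero 2 hz0.ne')]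
    ring
  rw [key, abs_div,
    abs_of_pos (show (0:ℝ) < (2*M - A*y)^2*(2*M - A*z)^2 by positivity),
    div_le_iff₀ (by positivity)]
  have h2 : |4*M*((2*M-A*z)^2 - (2*M-A*y)^2)| ≤ 4*M*(A * |y-z| * (2*U)) := by
    rw [abs_mul, abs_of_pos (show (0:ℝ) < 4*M by positivity)]
    have he : (2*M-A*z)^2 - (2*M-A*y)^2 = A*(y-z)*((2*M-A*z)+(2*M-A*y)) := by ring
    rw [he, abs_mul, abs_mul, abs_of_nonneg hA]
    have h3 : |(2*M-A*z)+(2*M-A*y)| ≤ 2*U := by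
      rw [abs_of_pos (by positivity)]; linarith
    have h4 : (0:ℝ) ≤ A * |y-z| := by positivity
    nlinarith [abs_nonneg (y-z), mul_le_mul_of_nonneg_left h3 h4]
  have hpq : D^2 ≤ (2*M - A*y)*(2*M - A*z) := by nlinarith
  have h5 : D^4 ≤ (2*M - A*y)^2*(2*M - A*z)^2 := by
    calc D^4 = (D^2)^2 := by ring
      _ ≤ ((2*M - A*y)*(2*M - A*z))^2 := by
          exact pow_le_pow_left₀ (by positivity) hpq 2
      _ = (2*M - A*y)^2*(2*M - A*z)^2 := by ring
  calc |4*M*((2*M-A*z)^2 - (2*M-A*y)^2)|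
      ≤ 4*M*(A * |y-z| * (2*U)) := h2
    _ = 8*M*A*U/D^4*|y-z| * D^4 := by field_simp; ring
    _ ≤ 8*M*A*U/D^4*|y-z| * ((2*M - A*y)^2*(2*M - A*z)^2) := by
        apply mul_le_mul_of_nonneg_left h5 (by positivity)

lemma phi'_le (M A D y : ℝ) (hM : 0 < M) (hD : 0 < D) (hy : D ≤ 2*M - A*y) :
    |4*M/(2*M - A*y)^2| ≤ 4*M/D^2 := by
  have hy0 : (0:ℝ) < 2*M - A*y := lt_of_lt_of_le hD hy
  rw [abs_of_pos (by positivity)]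
  apply div_le_div_of_nonneg_left (by positivity) (by positivity)
  nlinarith

lemma comp_primitive (M A : ℝ) (hM : 0 < M) (hA : 0 ≤ A)
    (g1 : ℝ → ℝ) (hg1Int : Integrable g1 volume)
    (c : ℝ) (Φ : ℝ → ℝ) (hΦ : ∀ t, Φ t = c + ∫ u in (0:ℝ)..t, g1 u)
    (x : ℝ) (hx : 0 ≤ x)
    (D : ℝ) (hD : 0 < D)
    (hlow : ∀ u ∈ Icc (0:ℝ) x, D ≤ 2*M - A*Φ u)
    (hΦnn : ∀ u ∈ Icc (0:ℝ) x, 0 ≤ Φ u)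
    (hhx : IntervalIntegrable (fun u => 4*M/(2*M - A*Φ u)^2 * g1 u) volume 0 x) :
    2*Φ x/(2*M - A*Φ x) = 2*Φ 0/(2*M - A*Φ 0)
      + ∫ u in (0:ℝ)..x, 4*M/(2*M - A*Φ u)^2 * g1 u := by
  set κ : ℝ := D/(2*(A+1)) with hκdef
  have hκ : 0 < κ := by rw [hκdef]; positivity
  have hAκ : A*κ ≤ D/2 := by
    have h1 : A*κ = A*D/(2*(A+1)) := by rw [hκdef]; ring
    rw [h1, div_le_div_iff₀ (by positivity) two_pos]
    nlinarith
  set L : ℝ := 4*M/(D/2)^2 with hLdef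
  have hL : 0 < L := by rw [hLdef]; positivity
  set U : ℝ := 2*M + A*κ with hUdef
  have hUpos : 0 < U := by nlinarith [mul_nonneg hA hκ.le]
  set L2 : ℝ := 8*M*A*U/(D/2)^4 with hL2def
  have hL2 : 0 ≤ L2 := by
    rw [hL2def]
    apply div_nonneg _ (by positivity)
    exact mul_nonneg (mul_nonneg (by positivity) hA) hUpos.le
  set I₁ : ℝ := ∫ u, |g1 u| with hI₁def
  have hI₁ : 0 ≤ I₁ := integral_nonneg (fun u => abs_nonneg _)
  set C : ℝ := 2*L + L2*I₁ with hCdef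
  have hC : 0 ≤ C := by nlinarith [mul_nonneg hL2 hI₁]
  clear_value κ L U L2 I₁ C
  have key : ∀ ε : ℝ, 0 < ε → ε ≤ κ →
      |(2*Φ x/(2*M - A*Φ x) - 2*Φ 0/(2*M - A*Φ 0))
        - ∫ u in (0:ℝ)..x, 4*M/(2*M - A*Φ u)^2 * g1 u| ≤ C*ε := by
    intro ε hε hεκ
    obtain ⟨gc, gc_supp, gc_close, gc_cont, gc_int⟩ :=
      hg1Int.exists_hasCompactSupport_integral_sub_le hε
    set Φc : ℝ → ℝ := fun t => c + ∫ u in (0:ℝ)..t, gc u with hΦcdef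
    have hgcint : ∀ a b : ℝ, IntervalIntegrable gc volume a b :=
      fun a b => gc_cont.intervalIntegrable a b
    have hΦcderiv : ∀ t : ℝ, HasDerivAt Φc (gc t) t := by
      intro t
      have h1 : HasDerivAt (fun s => ∫ u in (0:ℝ)..s, gc u) (gc t) t :=
        intervalIntegral.integral_hasDerivAt_right (hgcint 0 t)
          (gc_cont.stronglyMeasurableAtFilter _ _) gc_cont.continuousAt
      exact h1.const_add c
    have hΦccont : Continuous Φc :=
      continuous_iff_continuousAt.mpr fun t => (hΦcderiv t).continuousAt
    have hΦc0 : Φc 0 = Φ 0 := by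
      rw [hΦcdef, hΦ 0]
      simp
    clear_value Φc
    have hclose : ∀ t : ℝ, 0 ≤ t → |Φc t - Φ t| ≤ ε := by
      intro t ht
      have hdiff : Φc t - Φ t = ∫ u in (0:ℝ)..t, (gc u - g1 u) := by
        rw [intervalIntegral.integral_sub (hgcint 0 t) hg1Int.intervalIntegrable, hΦcdef, hΦ t]
        ring
      rw [hdiff]
      calc |∫ u in (0:ℝ)..t, (gc u - g1 u)| ≤ ∫ u in (0:ℝ)..t, |gc u - g1 u| :=
            intervalIntegral.abs_integral_le_integral_abs ht
        _ = ∫ u in Ioc (0:ℝ) t, |gc u - g1 u| := by rw [intervalIntegral.integral_of_le ht]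
        _ ≤ ∫ u, |gc u - g1 u| :=
            setIntegral_le_integral ((gc_int.sub hg1Int).abs) (ae_of_all _ fun u => abs_nonneg _)
        _ = ∫ u, ‖g1 u - gc u‖ := by
            simp_rw [Real.norm_eq_abs]
            congr 1
            funext u
            rw [abs_sub_comm]
        _ ≤ ε := gc_close
    have hAε : A*ε ≤ D/2 :=
      le_trans (mul_le_mul_of_nonneg_left hεκ hA) hAκ
    have hzone1 : ∀ u ∈ Icc (0:ℝ) x, D/2 ≤ 2*M - A*Φc u := by
      intro u hu
      have h1 := hlow u hu
      have h3 := (abs_le.mp (hclose u hu.1)).2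
      have h5 : A * (Φc u - Φ u) ≤ A * ε := mul_le_mul_of_nonneg_left h3 hA
      have h6 : A * (Φc u - Φ u) = A * Φc u - A * Φ u := by ring
      linarith
    have hzoneU1 : ∀ u ∈ Icc (0:ℝ) x, 2*M - A*Φc u ≤ U := by
      intro u hu
      have h1 := hΦnn u hu
      have h3 := (abs_le.mp (hclose u hu.1)).1
      have h4 : -ε ≤ Φc u := by linarith
      have h5 : A * (-ε) ≤ A * Φc u := mul_le_mul_of_nonneg_left h4 hA
      have h6 : A * ε ≤ A * κ := mul_le_mul_of_nonneg_left hεκ hA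
      have h7 : A * (-ε) = -(A*ε) := by ring
      rw [hUdef]
      linarith
    have hzone2 : ∀ u ∈ Icc (0:ℝ) x, D/2 ≤ 2*M - A*Φ u :=
      fun u hu => le_trans (by linarith) (hlow u hu)
    have hzoneU2 : ∀ u ∈ Icc (0:ℝ) x, 2*M - A*Φ u ≤ U := by
      intro u hu
      have h1 := hΦnn u hu
      rw [hUdef]
      have h8 := mul_nonneg hA h1
      have h9 := mul_nonneg hA hκ.le
      linarith
    have hderiv : ∀ t ∈ uIcc (0:ℝ) x,
        HasDerivAt (fun s => 2*Φc s/(2*M - A*Φc s)) (4*M/(2*M - A*Φc t)^2 * gc t) t := by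
      intro t ht
      rw [uIcc_of_le hx] at ht
      have hne : 2*M - A*Φc t ≠ 0 :=
        ne_of_gt (lt_of_lt_of_le (by positivity) (hzone1 t ht))
      exact (phi_hasDerivAt M A (Φc t) hne).comp t (hΦcderiv t)
    have hφ'c_cont : ContinuousOn (fun t => 4*M/(2*M - A*Φc t)^2) (Icc (0:ℝ) x) := by
      apply ContinuousOn.div continuousOn_const
      · exact ((continuous_const.sub (continuous_const.mul hΦccont)).pow 2).continuousOn
      · intro u hu
        exact pow_ne_zero 2 (ne_of_gt (lt_of_lt_of_le (by positivity) (hzone1 u hu)))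
    have hcint : IntervalIntegrable (fun t => 4*M/(2*M - A*Φc t)^2 * gc t) volume 0 x := by
      apply ContinuousOn.intervalIntegrable
      rw [uIcc_of_le hx]
      exact hφ'c_cont.mul gc_cont.continuousOn
    have hftc := intervalIntegral.integral_eq_sub_of_hasDerivAt hderiv hcint
    have hsplit : (2*Φ x/(2*M - A*Φ x) - 2*Φ 0/(2*M - A*Φ 0))
          - ∫ u in (0:ℝ)..x, 4*M/(2*M - A*Φ u)^2 * g1 u
        = (2*Φ x/(2*M - A*Φ x) - 2*Φc x/(2*M - A*Φc x))
          + ∫ u in (0:ℝ)..x,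
              (4*M/(2*M - A*Φc u)^2 * gc u - 4*M/(2*M - A*Φ u)^2 * g1 u) := by
      rw [intervalIntegral.integral_sub hcint hhx, hftc, hΦc0]
      ring
    rw [hsplit]
    have hptw : ∀ u ∈ Icc (0:ℝ) x,
        |4*M/(2*M - A*Φc u)^2 * gc u - 4*M/(2*M - A*Φ u)^2 * g1 u|
        ≤ L * |gc u - g1 u| + (L2*ε) * |g1 u| := by
      intro u hu
      have e1 : 4*M/(2*M - A*Φc u)^2 * gc u - 4*M/(2*M - A*Φ u)^2 * g1 u
          = 4*M/(2*M - A*Φc u)^2 * (gc u - g1 u)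
            + (4*M/(2*M - A*Φc u)^2 - 4*M/(2*M - A*Φ u)^2) * g1 u := by
        ring
      rw [e1]
      have b1 : |4*M/(2*M - A*Φc u)^2| ≤ L := by
        rw [hLdef]
        exact phi'_le M A (D/2) (Φc u) hM (by positivity) (hzone1 u hu)
      have b2 : |4*M/(2*M - A*Φc u)^2 - 4*M/(2*M - A*Φ u)^2| ≤ L2 * ε := by
        have hb := phi'_sub_le M A (D/2) U (Φc u) (Φ u) hM (by positivity) hA
          (hzone1 u hu) (hzone2 u hu) (hzoneU1 u hu) (hzoneU2 u hu)
        rw [hL2def]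
        calc |4*M/(2*M - A*Φc u)^2 - 4*M/(2*M - A*Φ u)^2|
            ≤ 8*M*A*U/(D/2)^4 * |Φc u - Φ u| := hb
          _ ≤ 8*M*A*U/(D/2)^4 * ε := by
              apply mul_le_mul_of_nonneg_left (hclose u hu.1)
              apply div_nonneg _ (by positivity)
              exact mul_nonneg (mul_nonneg (by positivity) hA) hUpos.le
      calc |4*M/(2*M - A*Φc u)^2 * (gc u - g1 u)
            + (4*M/(2*M - A*Φc u)^2 - 4*M/(2*M - A*Φ u)^2) * g1 u|
          ≤ |4*M/(2*M - A*Φc u)^2 * (gc u - g1 u)|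
            + |(4*M/(2*M - A*Φc u)^2 - 4*M/(2*M - A*Φ u)^2) * g1 u| := abs_add_le _ _
        _ ≤ L * |gc u - g1 u| + (L2*ε) * |g1 u| := by
            rw [abs_mul, abs_mul]
            apply add_le_add
            · exact mul_le_mul_of_nonneg_right b1 (abs_nonneg _)
            · exact mul_le_mul_of_nonneg_right b2 (abs_nonneg _)
    have hint1 : IntervalIntegrable
        (fun u => |4*M/(2*M - A*Φc u)^2 * gc u - 4*M/(2*M - A*Φ u)^2 * g1 u|)
        volume 0 x := (hcint.sub hhx).abs
    have hint2 : IntervalIntegrable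
        (fun u => L * |gc u - g1 u| + (L2*ε) * |g1 u|) volume 0 x := by
      apply IntervalIntegrable.add
      · exact (((hgcint 0 x).sub hg1Int.intervalIntegrable).abs).const_mul L
      · exact (hg1Int.intervalIntegrable.abs).const_mul _
    have hmono := intervalIntegral.integral_mono_on hx hint1 hint2 hptw
    have hsplit2 : (∫ u in (0:ℝ)..x, (L * |gc u - g1 u| + (L2*ε) * |g1 u|))
        = L * (∫ u in (0:ℝ)..x, |gc u - g1 u|) + (L2*ε) * ∫ u in (0:ℝ)..x, |g1 u| := by
      rw [intervalIntegral.integral_add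
          ((((hgcint 0 x).sub hg1Int.intervalIntegrable).abs).const_mul L)
          ((hg1Int.intervalIntegrable.abs).const_mul _),
        intervalIntegral.integral_const_mul, intervalIntegral.integral_const_mul]
    have hb1 : (∫ u in (0:ℝ)..x, |gc u - g1 u|) ≤ ε := by
      calc (∫ u in (0:ℝ)..x, |gc u - g1 u|)
          = ∫ u in Ioc (0:ℝ) x, |gc u - g1 u| := by rw [intervalIntegral.integral_of_le hx]
        _ ≤ ∫ u, |gc u - g1 u| :=
            setIntegral_le_integral ((gc_int.sub hg1Int).abs) (ae_of_all _ fun u => abs_nonneg _)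
        _ = ∫ u, ‖g1 u - gc u‖ := by
            simp_rw [Real.norm_eq_abs]
            congr 1
            funext u
            rw [abs_sub_comm]
        _ ≤ ε := gc_close
    have hb2 : (∫ u in (0:ℝ)..x, |g1 u|) ≤ I₁ := by
      rw [intervalIntegral.integral_of_le hx, hI₁def]
      exact setIntegral_le_integral hg1Int.abs (ae_of_all _ fun u => abs_nonneg _)
    have hfst : |2*Φ x/(2*M - A*Φ x) - 2*Φc x/(2*M - A*Φc x)| ≤ L * ε := by
      have hxm : x ∈ Icc (0:ℝ) x := ⟨hx, le_refl x⟩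
      have hb := phi_sub_le M A (D/2) (Φ x) (Φc x) hM (by positivity)
        (hzone2 x hxm) (hzone1 x hxm)
      have h2 : |Φ x - Φc x| ≤ ε := by rw [abs_sub_comm]; exact hclose x hx
      calc |2*Φ x/(2*M - A*Φ x) - 2*Φc x/(2*M - A*Φc x)|
          ≤ 4*M/(D/2)^2 * |Φ x - Φc x| := hb
        _ ≤ L * ε := by
            rw [hLdef]
            exact mul_le_mul_of_nonneg_left h2 (by positivity)
    have hsnd : |∫ u in (0:ℝ)..x,
          (4*M/(2*M - A*Φc u)^2 * gc u - 4*M/(2*M - A*Φ u)^2 * g1 u)|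
        ≤ L*ε + (L2*ε)*I₁ := by
      calc |∫ u in (0:ℝ)..x,
            (4*M/(2*M - A*Φc u)^2 * gc u - 4*M/(2*M - A*Φ u)^2 * g1 u)|
          ≤ ∫ u in (0:ℝ)..x,
              |4*M/(2*M - A*Φc u)^2 * gc u - 4*M/(2*M - A*Φ u)^2 * g1 u| :=
            intervalIntegral.abs_integral_le_integral_abs hx
        _ ≤ ∫ u in (0:ℝ)..x, (L * |gc u - g1 u| + (L2*ε) * |g1 u|) := hmono
        _ = L * (∫ u in (0:ℝ)..x, |gc u - g1 u|) + (L2*ε) * ∫ u in (0:ℝ)..x, |g1 u| := hsplit2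
        _ ≤ L*ε + (L2*ε)*I₁ := by
            apply add_le_add
            · exact mul_le_mul_of_nonneg_left hb1 hL.le
            · exact mul_le_mul_of_nonneg_left hb2 (mul_nonneg hL2 hε.le)
    calc |(2*Φ x/(2*M - A*Φ x) - 2*Φc x/(2*M - A*Φc x))
          + ∫ u in (0:ℝ)..x,
              (4*M/(2*M - A*Φc u)^2 * gc u - 4*M/(2*M - A*Φ u)^2 * g1 u)|
        ≤ |2*Φ x/(2*M - A*Φ x) - 2*Φc x/(2*M - A*Φc x)|
          + |∫ u in (0:ℝ)..x,
              (4*M/(2*M - A*Φc u)^2 * gc u - 4*M/(2*M - A*Φ u)^2 * g1 u)| := abs_add_le _ _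
      _ ≤ L*ε + (L*ε + (L2*ε)*I₁) := add_le_add hfst hsnd
      _ = C*ε := by rw [hCdef]; ring
  have hzero : (2*Φ x/(2*M - A*Φ x) - 2*Φ 0/(2*M - A*Φ 0))
      - ∫ u in (0:ℝ)..x, 4*M/(2*M - A*Φ u)^2 * g1 u = 0 := by
    by_contra hne
    set d : ℝ := |(2*Φ x/(2*M - A*Φ x) - 2*Φ 0/(2*M - A*Φ 0))
      - ∫ u in (0:ℝ)..x, 4*M/(2*M - A*Φ u)^2 * g1 u| with hddef
    have hdpos : 0 < d := abs_pos.mpr hne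
    clear_value d
    have hCpos : (0:ℝ) < 2*(C+1) := by linarith
    have h1 := key (min κ (d/(2*(C+1)))) (lt_min hκ (div_pos hdpos hCpos)) (min_le_left _ _)
    have h2 : C * min κ (d/(2*(C+1))) ≤ C * (d/(2*(C+1))) :=
      mul_le_mul_of_nonneg_left (min_le_right _ _) hC
    have h3 : C * (d/(2*(C+1))) < d := by
      rw [mul_div_assoc', div_lt_iff₀ hCpos]
      nlinarith [mul_nonneg hC hdpos.le]
    linarith
  linarith [hzero]

/-- Conversely, if for some fixed `M > 0`, `A ≥ 0` the function
`G : T ↦ 2 F(T) M/(2 + F(T) A)` (the value of `2M/(2 F(T)⁻¹ + A)`, equal to `0` when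
`F T = 0`) is absolutely continuous on `[0,T_h]` — i.e. the integral of an integrable
function — where `F` is continuous, nonnegative and monotone decreasing, then `F` itself
is absolutely continuous on `[0,T_h]`. -/
theorem stmt10 (Th : ℝ) (hTh : 0 < Th)
    (F : ℝ → ℝ) (hFcont : ContinuousOn F (Icc 0 Th))
    (hFnonneg : ∀ t ∈ Icc (0:ℝ) Th, 0 ≤ F t) (hFanti : AntitoneOn F (Icc 0 Th))
    (M A : ℝ) (hM : 0 < M) (hA : 0 ≤ A)
    (G : ℝ → ℝ) (hG : ∀ T, G T = 2 * F T * M / (2 + F T * A))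
    (hGac : ∃ g : ℝ → ℝ, IntervalIntegrable g volume 0 Th ∧
      ∀ x ∈ Icc (0:ℝ) Th, G x = G 0 + ∫ u in (0:ℝ)..x, g u) :
    ∃ h : ℝ → ℝ, IntervalIntegrable h volume 0 Th ∧
      ∀ x ∈ Icc (0:ℝ) Th, F x = F 0 + ∫ u in (0:ℝ)..x, h u := by
  obtain ⟨g, hgInt, hgEq⟩ := hGac
  have h0mem : (0:ℝ) ∈ Icc (0:ℝ) Th := ⟨le_refl 0, hTh.le⟩
  have hden : ∀ t ∈ Icc (0:ℝ) Th, 0 < 2 + F t * A := by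
    intro t ht; nlinarith [hFnonneg t ht]
  have hGnonneg : ∀ t ∈ Icc (0:ℝ) Th, 0 ≤ G t := by
    intro t ht; rw [hG t]
    exact div_nonneg (by nlinarith [hFnonneg t ht]) (hden t ht).le
  have hGle : ∀ t ∈ Icc (0:ℝ) Th, G t ≤ G 0 := by
    intro t ht
    rw [hG t, hG 0, div_le_div_iff₀ (hden t ht) (hden 0 h0mem)]
    have hF := hFanti h0mem ht ht.1
    nlinarith [hFnonneg t ht, hFnonneg 0 h0mem]
  have hD4 : ∀ t ∈ Icc (0:ℝ) Th, (2*M - A*G t) * (2 + F t * A) = 4*M := by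
    intro t ht; rw [hG t]; rw [sub_mul, mul_assoc A, div_mul_cancel₀ _ (hden t ht).ne']; ring
  have hDpos : ∀ t ∈ Icc (0:ℝ) Th, 0 < 2*M - A*G t := by
    intro t ht
    have h4 := hD4 t ht
    nlinarith [hden t ht]
  set D : ℝ := 2*M - A*(G 0) with hDdef
  have hD : 0 < D := hDpos 0 h0mem
  have hFeq : ∀ t ∈ Icc (0:ℝ) Th, F t = 2*(G t)/(2*M - A*(G t)) := by
    intro t ht
    rw [eq_div_iff (hDpos t ht).ne']
    have e : G t * (2 + F t * A) = 2 * F t * M := by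
      rw [hG t]; field_simp [(hden t ht).ne']
    linear_combination -e
  -- the truncated integrand and the primitive
  set g1 : ℝ → ℝ := (Icc (0:ℝ) Th).indicator g with hg1def
  have hgIcc : IntegrableOn g (Icc 0 Th) volume :=
    (intervalIntegrable_iff_integrableOn_Icc_of_le hTh.le).mp hgInt
  have hg1Int : Integrable g1 volume :=
    hgIcc.integrable_indicator measurableSet_Icc
  set Φ : ℝ → ℝ := fun t => G 0 + ∫ u in (0:ℝ)..t, g1 u with hΦdef
  have hΦcont : Continuous Φ := continuous_const.add (hg1Int.continuous_primitive 0)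
  have hΦeq : ∀ t ∈ Icc (0:ℝ) Th, Φ t = G t := by
    intro t ht
    have hsub : uIcc (0:ℝ) t ⊆ Icc 0 Th := by
      rw [uIcc_of_le ht.1]
      exact Icc_subset_Icc le_rfl ht.2
    have hcongr : ∫ u in (0:ℝ)..t, g1 u = ∫ u in (0:ℝ)..t, g u := by
      apply intervalIntegral.integral_congr
      intro u hu
      exact indicator_of_mem (hsub hu) g
    rw [hΦdef]
    simp only
    rw [hcongr, ← hgEq t ht]
  have hΦ0 : Φ 0 = G 0 := hΦeq 0 h0mem
  have hΦnonneg : ∀ t ∈ Icc (0:ℝ) Th, 0 ≤ Φ t := by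
    intro t ht; rw [hΦeq t ht]; exact hGnonneg t ht
  have hΦle : ∀ t ∈ Icc (0:ℝ) Th, Φ t ≤ G 0 := by
    intro t ht; rw [hΦeq t ht]; exact hGle t ht
  have hΦden : ∀ t ∈ Icc (0:ℝ) Th, D ≤ 2*M - A*Φ t := by
    intro t ht
    have h1 := hΦle t ht
    rw [hDdef]
    nlinarith
  -- the candidate density
  set h : ℝ → ℝ := fun u => 4*M/(2*M - A*Φ u)^2 * g1 u with hhdef
  have hφ'cont : ContinuousOn (fun u => 4*M/(2*M - A*Φ u)^2) (Icc (0:ℝ) Th) := by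
    apply ContinuousOn.div continuousOn_const
    · exact ((continuous_const.sub (continuous_const.mul hΦcont)).pow 2).continuousOn
    · intro u hu
      exact pow_ne_zero 2 (ne_of_gt (lt_of_lt_of_le hD (hΦden u hu)))
  have hhInt : IntervalIntegrable h volume 0 Th := by
    rw [intervalIntegrable_iff_integrableOn_Icc_of_le hTh.le]
    exact IntegrableOn.continuousOn_mul hφ'cont hg1Int.integrableOn isCompact_Icc
  refine ⟨h, hhInt, ?_⟩
  intro x hx
  have hΦapp : ∀ t, Φ t = G 0 + ∫ u in (0:ℝ)..t, g1 u := by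
    intro t; rw [hΦdef]
  have hIccx : Icc (0:ℝ) x ⊆ Icc (0:ℝ) Th := Icc_subset_Icc le_rfl hx.2
  have hsubx : uIcc (0:ℝ) x ⊆ uIcc (0:ℝ) Th := by
    rw [uIcc_of_le hx.1, uIcc_of_le hTh.le]
    exact Icc_subset_Icc le_rfl hx.2
  have hhx : IntervalIntegrable (fun u => 4*M/(2*M - A*Φ u)^2 * g1 u) volume 0 x :=
    hhInt.mono_set hsubx
  have hmain := comp_primitive M A hM hA g1 hg1Int (G 0) Φ hΦapp x hx.1 D hD
    (fun u hu => hΦden u (hIccx hu)) (fun u hu => hΦnonneg u (hIccx hu)) hhx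
  rw [hFeq x hx, hFeq 0 h0mem, ← hΦeq x hx, ← hΦ0]
  exact hmain
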